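/- Let f be holomorphic and nonvanishing-derivative on an open set U ⊆ ℂ and define u(z) = log(8|f'(z)|² / (1 + |f(z)|²)²). Then u satisfies the Liouville equation Δu + e^u = 0 on U (where Δ is the real Laplacian on ℝ² ≅ ℂ). -/

import Mathlib

open Complex Filter

noncomputable def lap (u : ℂ → ℝ) (z : ℂ) : ℝ :=
  fderiv ℝ (fun w => fderiv ℝ u w 1) z 1
    + fderiv ℝ (fun w => fderiv ℝ u w Complex.I) z Complex.I

-- helper: ℂ-linear maps are multiplication
lemma clm_apply_eq (L : ℂ →L[ℂ] ℂ) (v : ℂ) : L v = v * L 1 := by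
  conv_lhs => rw [show v = v • (1 : ℂ) by simp]
  rw [map_smul]; simp [smul_eq_mul]

section workhorse

variable {p q : ℂ → ℂ} {z : ℂ}

lemma hasFDerivAt_reMulConj (hp : DifferentiableAt ℂ p z) (hq : DifferentiableAt ℂ q z) :
    HasFDerivAt (fun w => (p w * (starRingEnd ℂ) (q w)).re)
      (Complex.reCLM.comp
        ((p z • ((Complex.conjCLE : ℂ ≃L[ℝ] ℂ).toContinuousLinearMap.comp
            ((fderiv ℂ q z).restrictScalars ℝ)))
          + ((fderiv ℂ p z).restrictScalars ℝ).smulRight ((starRingEnd ℂ) (q z)))) z := by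
  have hp' : HasFDerivAt p ((fderiv ℂ p z).restrictScalars ℝ) z :=
    (hp.hasFDerivAt).restrictScalars ℝ
  have hq' : HasFDerivAt q ((fderiv ℂ q z).restrictScalars ℝ) z :=
    (hq.hasFDerivAt).restrictScalars ℝ
  have hc : HasFDerivAt (fun w => (starRingEnd ℂ) (q w))
      ((Complex.conjCLE : ℂ ≃L[ℝ] ℂ).toContinuousLinearMap.comp
        ((fderiv ℂ q z).restrictScalars ℝ)) z := by
    have := ((Complex.conjCLE : ℂ ≃L[ℝ] ℂ).toContinuousLinearMap.hasFDerivAt).comp z hq'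
    exact this
  have hm := hp'.mul' hc
  have := (Complex.reCLM.hasFDerivAt).comp z hm
  refine this.congr_fderiv ?_
  ext v
  simp [ContinuousLinearMap.smulRight_apply]
  ring

lemma diffAt_reMulConj (hp : DifferentiableAt ℂ p z) (hq : DifferentiableAt ℂ q z) :
    DifferentiableAt ℝ (fun w => (p w * (starRingEnd ℂ) (q w)).re) z :=
  (hasFDerivAt_reMulConj hp hq).differentiableAt

lemma fderiv_reMulConj (hp : DifferentiableAt ℂ p z) (hq : DifferentiableAt ℂ q z) (v : ℂ) :
    fderiv ℝ (fun w => (p w * (starRingEnd ℂ) (q w)).re) z v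
      = (deriv p z * v * (starRingEnd ℂ) (q z)).re
        + (p z * (starRingEnd ℂ) (deriv q z * v)).re := by
  rw [(hasFDerivAt_reMulConj hp hq).fderiv]
  have e1 : fderiv ℂ p z v = deriv p z * v := by
    rw [clm_apply_eq (fderiv ℂ p z) v, fderiv_apply_one_eq_deriv]; ring
  have e2 : fderiv ℂ q z v = deriv q z * v := by
    rw [clm_apply_eq (fderiv ℂ q z) v, fderiv_apply_one_eq_deriv]; ring
  simp [ContinuousLinearMap.smulRight_apply, e1, e2, smul_eq_mul, Complex.mul_re,
    Complex.mul_im]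
  ring

end workhorse

section corollaries

variable {p : ℂ → ℂ} {z : ℂ}

lemma diffAt_re_comp (hp : DifferentiableAt ℂ p z) :
    DifferentiableAt ℝ (fun w => (p w).re) z := by
  have := diffAt_reMulConj hp (differentiableAt_const (1 : ℂ))
  simpa using this

lemma fderiv_re_comp (hp : DifferentiableAt ℂ p z) (v : ℂ) :
    fderiv ℝ (fun w => (p w).re) z v = (deriv p z * v).re := by
  have := fderiv_reMulConj hp (differentiableAt_const (1 : ℂ)) v
  simpa using this

end corollaries

lemma lap_congr {u v : ℂ → ℝ} {z : ℂ} (h : u =ᶠ[nhds z] v) : lap u z = lap v z := by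
  have h1 : fderiv ℝ u =ᶠ[nhds z] fderiv ℝ v := h.fderiv
  have e1 : (fun w => fderiv ℝ u w 1) =ᶠ[nhds z] fun w => fderiv ℝ v w 1 :=
    h1.mono fun w hw => by simp only [hw]
  have eI : (fun w => fderiv ℝ u w Complex.I) =ᶠ[nhds z] fun w => fderiv ℝ v w Complex.I :=
    h1.mono fun w hw => by simp only [hw]
  unfold lap
  rw [e1.fderiv_eq, eI.fderiv_eq]

lemma lap_comb {R B : ℂ → ℝ} {z : ℂ} {C : ℝ}
    (hR : ∀ᶠ w in nhds z, DifferentiableAt ℝ R w)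
    (hB : ∀ᶠ w in nhds z, DifferentiableAt ℝ B w)
    (hR1 : DifferentiableAt ℝ (fun w => fderiv ℝ R w 1) z)
    (hRI : DifferentiableAt ℝ (fun w => fderiv ℝ R w Complex.I) z)
    (hB1 : DifferentiableAt ℝ (fun w => fderiv ℝ B w 1) z)
    (hBI : DifferentiableAt ℝ (fun w => fderiv ℝ B w Complex.I) z) :
    lap (fun w => C + (2 * R w - 2 * B w)) z = 2 * lap R z - 2 * lap B z := by
  have key : ∀ v : ℂ, (fun w => fderiv ℝ (fun w' => C + (2 * R w' - 2 * B w')) w v)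
      =ᶠ[nhds z] fun w => 2 * fderiv ℝ R w v - 2 * fderiv ℝ B w v := by
    intro v
    filter_upwards [hR, hB] with w h1 h2
    rw [fderiv_const_add, fderiv_fun_sub (h1.const_mul 2) (h2.const_mul 2),
      fderiv_const_mul h1 2, fderiv_const_mul h2 2]
    simp [smul_eq_mul]
  have fin : ∀ v : ℂ, DifferentiableAt ℝ (fun w => fderiv ℝ R w v) z →
      DifferentiableAt ℝ (fun w => fderiv ℝ B w v) z →
      fderiv ℝ (fun w => fderiv ℝ (fun w' => C + (2 * R w' - 2 * B w')) w v) z v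
        = 2 * fderiv ℝ (fun w => fderiv ℝ R w v) z v
          - 2 * fderiv ℝ (fun w => fderiv ℝ B w v) z v := by
    intro v hRv hBv
    rw [(key v).fderiv_eq, fderiv_fun_sub (hRv.const_mul 2) (hBv.const_mul 2),
      fderiv_const_mul hRv 2, fderiv_const_mul hBv 2]
    simp [smul_eq_mul]
  unfold lap
  rw [fin 1 hR1 hB1, fin Complex.I hRI hBI]
  ring

lemma lap_re_holo {h : ℂ → ℂ} {V : Set ℂ} {z : ℂ} (hV : IsOpen V) (hz : z ∈ V)
    (hh : DifferentiableOn ℂ h V) : lap (fun w => (h w).re) z = 0 := by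
  have hA : AnalyticOnNhd ℂ h V := hh.analyticOnNhd hV
  have hd : ∀ w ∈ V, DifferentiableAt ℂ h w := fun w hw => (hA w hw).differentiableAt
  have hA' : AnalyticOnNhd ℂ (deriv h) V := hA.deriv
  have hd2 : DifferentiableAt ℂ (deriv h) z := (hA' z hz).differentiableAt
  have E1 : (fun w => fderiv ℝ (fun w' => (h w').re) w 1)
      =ᶠ[nhds z] fun w => (deriv h w).re := by
    filter_upwards [hV.mem_nhds hz] with w hw
    rw [fderiv_re_comp (hd w hw) 1, mul_one]
  have EI : (fun w => fderiv ℝ (fun w' => (h w').re) w Complex.I)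
      =ᶠ[nhds z] fun w => (deriv h w * Complex.I).re := by
    filter_upwards [hV.mem_nhds hz] with w hw
    rw [fderiv_re_comp (hd w hw) Complex.I]
  unfold lap
  rw [E1.fderiv_eq, EI.fderiv_eq, fderiv_re_comp hd2 1, mul_one]
  have hdI : DifferentiableAt ℂ (fun w => deriv h w * Complex.I) z := hd2.mul_const _
  have : (fun w => (deriv h w * Complex.I).re)
      = fun w => ((fun w' => deriv h w' * Complex.I) w).re := rfl
  rw [this, fderiv_re_comp hdI Complex.I, deriv_mul_const hd2 Complex.I]
  have : deriv (deriv h) z * Complex.I * Complex.I = -(deriv (deriv h) z) := by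
    rw [mul_assoc, Complex.I_mul_I]; ring
  rw [this, Complex.neg_re]
  ring

lemma hasFDerivAt_div' {T s : ℂ → ℝ} {LT Ls : ℂ →L[ℝ] ℝ} {z : ℂ}
    (hT : HasFDerivAt T LT z) (hs : HasFDerivAt s Ls z) (h0 : s z ≠ 0) :
    HasFDerivAt (fun w => T w / s w)
      ((s z)⁻¹ • LT - (T z / (s z) ^ 2) • Ls) z := by
  have hinv : HasFDerivAt (fun w => (s w)⁻¹) ((-((s z) ^ 2)⁻¹) • Ls) z := by
    have := (hasDerivAt_inv h0).comp_hasFDerivAt z hs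
    exact this
  have hm := hT.mul hinv
  have : (fun w => T w / s w) = fun w => T w * (s w)⁻¹ := by
    funext w; rw [div_eq_mul_inv]
  rw [this]
  refine hm.congr_fderiv ?_
  ext v
  simp [smul_eq_mul]
  ring

lemma lap_log_one_add_normSq {f : ℂ → ℂ} {V : Set ℂ} {z : ℂ} (hV : IsOpen V) (hz : z ∈ V)
    (hf : DifferentiableOn ℂ f V) :
    lap (fun w => Real.log (1 + Complex.normSq (f w))) z
      = 4 * Complex.normSq (deriv f z) / (1 + Complex.normSq (f z)) ^ 2 := by
  have hA : AnalyticOnNhd ℂ f V := hf.analyticOnNhd hV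
  have hd : ∀ w ∈ V, DifferentiableAt ℂ f w := fun w hw => (hA w hw).differentiableAt
  have hd2 : DifferentiableAt ℂ (deriv f) z := ((hA.deriv) z hz).differentiableAt
  set s : ℂ → ℝ := fun w => 1 + Complex.normSq (f w) with hs_def
  have hseq : s = fun w => 1 + (f w * (starRingEnd ℂ) (f w)).re := by
    funext w; simp [hs_def, Complex.mul_conj]
  have hspos : ∀ w, 0 < s w := fun w => by
    have := Complex.normSq_nonneg (f w); simp only [hs_def]; positivity
  have hsdiff : ∀ w ∈ V, DifferentiableAt ℝ s w := by
    intro w hw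
    rw [hseq]
    exact (diffAt_reMulConj (hd w hw) (hd w hw)).const_add 1
  have hsf : ∀ w ∈ V, ∀ v, fderiv ℝ s w v
      = 2 * (deriv f w * v * (starRingEnd ℂ) (f w)).re := by
    intro w hw v
    rw [hseq]
    have : fderiv ℝ (fun w' => 1 + (f w' * (starRingEnd ℂ) (f w')).re) w
        = fderiv ℝ (fun w' => (f w' * (starRingEnd ℂ) (f w')).re) w := fderiv_const_add 1
    rw [this, fderiv_reMulConj (hd w hw) (hd w hw) v]
    have flip : (f w * (starRingEnd ℂ) (deriv f w * v)).re
        = (deriv f w * v * (starRingEnd ℂ) (f w)).re := by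
      rw [← Complex.conj_re (f w * (starRingEnd ℂ) (deriv f w * v))]
      simp [map_mul, mul_comm]
    rw [flip]; ring
  -- the first-layer derivative formula for B = log ∘ s
  have hBf : ∀ w ∈ V, ∀ v, fderiv ℝ (fun w' => Real.log (s w')) w v
      = 2 * (deriv f w * v * (starRingEnd ℂ) (f w)).re / s w := by
    intro w hw v
    have hFD : HasFDerivAt (fun w' => Real.log (s w')) ((s w)⁻¹ • fderiv ℝ s w) w :=
      (Real.hasDerivAt_log (hspos w).ne').comp_hasFDerivAt w (hsdiff w hw).hasFDerivAt
    rw [hFD.fderiv]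
    simp only [ContinuousLinearMap.smul_apply, smul_eq_mul, hsf w hw v]
    ring
  -- eventual equality of first-layer derivatives
  have E1 : (fun w => fderiv ℝ (fun w' => Real.log (s w')) w 1)
      =ᶠ[nhds z] fun w => 2 * (deriv f w * (starRingEnd ℂ) (f w)).re / s w := by
    filter_upwards [hV.mem_nhds hz] with w hw
    rw [hBf w hw 1, mul_one]
  have EI : (fun w => fderiv ℝ (fun w' => Real.log (s w')) w Complex.I)
      =ᶠ[nhds z] fun w => 2 * (deriv f w * Complex.I * (starRingEnd ℂ) (f w)).re / s w := by
    filter_upwards [hV.mem_nhds hz] with w hw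
    rw [hBf w hw Complex.I]
  -- numerator functions
  have hN1 : DifferentiableAt ℝ (fun w => (deriv f w * (starRingEnd ℂ) (f w)).re) z :=
    diffAt_reMulConj hd2 (hd z hz)
  have hdI : DifferentiableAt ℂ (fun w => deriv f w * Complex.I) z := hd2.mul_const _
  have hNI : DifferentiableAt ℝ
      (fun w => (deriv f w * Complex.I * (starRingEnd ℂ) (f w)).re) z :=
    diffAt_reMulConj (p := fun w => deriv f w * Complex.I) hdI (hd z hz)
  have hT1 : DifferentiableAt ℝ (fun w => 2 * (deriv f w * (starRingEnd ℂ) (f w)).re) z :=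
    hN1.const_mul 2
  have hTI : DifferentiableAt ℝ
      (fun w => 2 * (deriv f w * Complex.I * (starRingEnd ℂ) (f w)).re) z :=
    hNI.const_mul 2
  have hsz : DifferentiableAt ℝ s z := hsdiff z hz
  -- fderiv of numerators at z
  have hfT1 : ∀ v, fderiv ℝ (fun w => 2 * (deriv f w * (starRingEnd ℂ) (f w)).re) z v
      = 2 * ((deriv (deriv f) z * v * (starRingEnd ℂ) (f z)).re
          + (deriv f z * (starRingEnd ℂ) (deriv f z * v)).re) := by
    intro v
    rw [fderiv_const_mul hN1 2]
    simp only [ContinuousLinearMap.smul_apply, smul_eq_mul]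
    rw [fderiv_reMulConj hd2 (hd z hz) v]
  have hfTI : ∀ v, fderiv ℝ
      (fun w => 2 * (deriv f w * Complex.I * (starRingEnd ℂ) (f w)).re) z v
      = 2 * ((deriv (deriv f) z * Complex.I * v * (starRingEnd ℂ) (f z)).re
          + (deriv f z * Complex.I * (starRingEnd ℂ) (deriv f z * v)).re) := by
    intro v
    rw [fderiv_const_mul hNI 2]
    simp only [ContinuousLinearMap.smul_apply, smul_eq_mul]
    rw [fderiv_reMulConj (p := fun w => deriv f w * Complex.I) hdI (hd z hz) v,
      deriv_mul_const hd2 Complex.I]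
  -- quotient derivative
  have quot : ∀ (T : ℂ → ℝ), DifferentiableAt ℝ T z → ∀ v,
      fderiv ℝ (fun w => T w / s w) z v
        = (s z)⁻¹ * fderiv ℝ T z v - T z / (s z) ^ 2 * fderiv ℝ s z v := by
    intro T hT v
    rw [(hasFDerivAt_div' hT.hasFDerivAt hsz.hasFDerivAt (hspos z).ne').fderiv]
    simp [smul_eq_mul]
  have hBlap : lap (fun w => Real.log (1 + Complex.normSq (f w))) z
      = fderiv ℝ (fun w => 2 * (deriv f w * (starRingEnd ℂ) (f w)).re / s w) z 1
        + fderiv ℝ (fun w => 2 * (deriv f w * Complex.I * (starRingEnd ℂ) (f w)).re / s w)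
            z Complex.I := by
    have : (fun w => Real.log (1 + Complex.normSq (f w)))
        = fun w => Real.log (s w) := rfl
    rw [this]
    unfold lap
    rw [E1.fderiv_eq, EI.fderiv_eq]
  rw [hBlap, quot _ hT1 1, quot _ hTI Complex.I, hfT1 1, hfTI Complex.I,
    hsf z hz 1, hsf z hz Complex.I]
  -- now pure algebra over ℂ/ℝ
  set F2 := deriv (deriv f) z
  set F1 := deriv f z
  set F0 := f z
  have idB : (F1 * (starRingEnd ℂ) (F1 * 1)).re = Complex.normSq F1 := by
    rw [mul_one, Complex.mul_conj]; simp
  have idA : (F2 * Complex.I * Complex.I * (starRingEnd ℂ) F0).re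
      = -((F2 * (starRingEnd ℂ) F0).re) := by
    have : F2 * Complex.I * Complex.I * (starRingEnd ℂ) F0
        = -(F2 * (starRingEnd ℂ) F0) := by
      rw [mul_assoc F2 Complex.I Complex.I, Complex.I_mul_I]; ring
    rw [this, Complex.neg_re]
  have idB2 : (F1 * Complex.I * (starRingEnd ℂ) (F1 * Complex.I)).re
      = Complex.normSq F1 := by
    rw [Complex.mul_conj]
    simp [Complex.normSq_mul]
  have idC : (F1 * Complex.I * (starRingEnd ℂ) F0).re
      = -((F1 * (starRingEnd ℂ) F0).im) := by
    rw [show F1 * Complex.I * (starRingEnd ℂ) F0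
        = (F1 * (starRingEnd ℂ) F0) * Complex.I by ring, Complex.mul_I_re]
  have idD : ((F2 * 1) * (starRingEnd ℂ) F0).re = (F2 * (starRingEnd ℂ) F0).re := by
    rw [mul_one]
  have idB' : (F1 * (starRingEnd ℂ) F1).re = Complex.normSq F1 := by
    rw [Complex.mul_conj]; simp
  have idsum : (F1 * (starRingEnd ℂ) F0).re ^ 2 + (F1 * (starRingEnd ℂ) F0).im ^ 2
      = Complex.normSq F1 * Complex.normSq F0 := by
    have h1 : Complex.normSq (F1 * (starRingEnd ℂ) F0)
        = Complex.normSq F1 * Complex.normSq F0 := by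
      rw [Complex.normSq_mul, Complex.normSq_conj]
    have h2 := Complex.normSq_apply (F1 * (starRingEnd ℂ) F0)
    rw [← h1, h2]; ring
  have hSz : s z = 1 + Complex.normSq F0 := rfl
  simp only [mul_one]
  rw [idA, idB', idB2, idC, hSz]
  have h0 : (0:ℝ) < 1 + Complex.normSq F0 := by nlinarith [Complex.normSq_nonneg F0]
  have hS0' : (1 : ℝ) + Complex.normSq F0 ≠ 0 := h0.ne'
  field_simp
  simp only [Complex.normSq_apply, Complex.mul_re, Complex.mul_im, Complex.conj_re, Complex.conj_im]
  ring

lemma diff_one_add_normSq {f : ℂ → ℂ} {z : ℂ} (hfz : DifferentiableAt ℂ f z) :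
    DifferentiableAt ℝ (fun w => 1 + Complex.normSq (f w)) z := by
  have e : (fun w => 1 + Complex.normSq (f w))
      = fun w => 1 + (f w * (starRingEnd ℂ) (f w)).re := by
    funext w; simp [Complex.mul_conj]
  rw [e]
  exact (diffAt_reMulConj hfz hfz).const_add 1

lemma diff_log_one_add_normSq {f : ℂ → ℂ} {z : ℂ} (hfz : DifferentiableAt ℂ f z) :
    DifferentiableAt ℝ (fun w => Real.log (1 + Complex.normSq (f w))) z := by
  have hpos : (0:ℝ) < 1 + Complex.normSq (f z) := by
    nlinarith [Complex.normSq_nonneg (f z)]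
  exact (diff_one_add_normSq hfz).log hpos.ne'

lemma fderiv_log_one_add_normSq {f : ℂ → ℂ} {z : ℂ} (hfz : DifferentiableAt ℂ f z) (v : ℂ) :
    fderiv ℝ (fun w => Real.log (1 + Complex.normSq (f w))) z v
      = 2 * (deriv f z * v * (starRingEnd ℂ) (f z)).re / (1 + Complex.normSq (f z)) := by
  have hpos : (0:ℝ) < 1 + Complex.normSq (f z) := by
    nlinarith [Complex.normSq_nonneg (f z)]
  have hsd := diff_one_add_normSq hfz
  have hFD : HasFDerivAt (fun w => Real.log (1 + Complex.normSq (f w)))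
      ((1 + Complex.normSq (f z))⁻¹ • fderiv ℝ (fun w => 1 + Complex.normSq (f w)) z) z :=
    by simpa only [Function.comp_def] using
      (Real.hasDerivAt_log hpos.ne').comp_hasFDerivAt z hsd.hasFDerivAt
  rw [hFD.fderiv]
  have e : (fun w => 1 + Complex.normSq (f w))
      = fun w => 1 + (f w * (starRingEnd ℂ) (f w)).re := by
    funext w; simp [Complex.mul_conj]
  have hfd : fderiv ℝ (fun w => 1 + Complex.normSq (f w)) z v
      = 2 * (deriv f z * v * (starRingEnd ℂ) (f z)).re := by
    rw [e]
    have : fderiv ℝ (fun w' => 1 + (f w' * (starRingEnd ℂ) (f w')).re) z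
        = fderiv ℝ (fun w' => (f w' * (starRingEnd ℂ) (f w')).re) z := fderiv_const_add 1
    rw [this, fderiv_reMulConj hfz hfz v]
    have flip : (f z * (starRingEnd ℂ) (deriv f z * v)).re
        = (deriv f z * v * (starRingEnd ℂ) (f z)).re := by
      rw [← Complex.conj_re (f z * (starRingEnd ℂ) (deriv f z * v))]
      simp [map_mul, mul_comm]
    rw [flip]; ring
  simp only [ContinuousLinearMap.smul_apply, smul_eq_mul, hfd]
  ring

theorem liouville_equation_of_developing_map (U : Set ℂ) (hU : IsOpen U)
    (f : ℂ → ℂ) (hf : DifferentiableOn ℂ f U) (hf' : ∀ z ∈ U, deriv f z ≠ 0)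
    (u : ℂ → ℝ)
    (hu : ∀ z ∈ U, u z = Real.log
      (8 * ‖deriv f z‖ ^ 2 / (1 + ‖f z‖ ^ 2) ^ 2)) :
    ∀ z ∈ U, lap u z + Real.exp (u z) = 0 := by
  intro z hz
  have hA : AnalyticOnNhd ℂ f U := hf.analyticOnNhd hU
  have hA' : AnalyticOnNhd ℂ (deriv f) U := hA.deriv
  have hc0 : deriv f z ≠ 0 := hf' z hz
  have hVopen : IsOpen (U ∩ (fun w => deriv f w / deriv f z) ⁻¹' Complex.slitPlane) :=
    (hA'.continuousOn.div_const _).isOpen_inter_preimage hU Complex.isOpen_slitPlane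
  have hzV : z ∈ U ∩ (fun w => deriv f w / deriv f z) ⁻¹' Complex.slitPlane := by
    refine ⟨hz, ?_⟩
    simp only [Set.mem_preimage, div_self hc0]
    exact Complex.one_mem_slitPlane
  set V := U ∩ (fun w => deriv f w / deriv f z) ⁻¹' Complex.slitPlane with hV_def
  have hVsub : V ⊆ U := Set.inter_subset_left
  have hne : ∀ w ∈ V, deriv f w ≠ 0 := by
    rintro w ⟨hwU, hwP⟩ h0
    apply Complex.zero_notMem_slitPlane
    have : deriv f w / deriv f z ∈ Complex.slitPlane := hwP
    rwa [h0, zero_div] at this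
  have hhAt : ∀ w ∈ V, DifferentiableAt ℂ
      (fun w' => Complex.log (deriv f w' / deriv f z)) w := by
    intro w hw
    have h1 : DifferentiableAt ℂ (fun w' => deriv f w' / deriv f z) w :=
      ((hA' w (hVsub hw)).differentiableAt).div_const _
    exact (Complex.differentiableAt_log hw.2).comp w h1
  have hhd : DifferentiableOn ℂ (fun w' => Complex.log (deriv f w' / deriv f z)) V :=
    fun w hw => (hhAt w hw).differentiableWithinAt
  have hdh : DifferentiableAt ℂ
      (deriv (fun w' => Complex.log (deriv f w' / deriv f z))) z :=
    (((hhd.analyticOnNhd hVopen).deriv) z hzV).differentiableAt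
  have hfAt : ∀ w ∈ V, DifferentiableAt ℂ f w := fun w hw => (hA w (hVsub hw)).differentiableAt
  have hd2 : DifferentiableAt ℂ (deriv f) z := (hA' z hz).differentiableAt
  -- the eventual identity for u
  have hueq : u =ᶠ[nhds z] fun w =>
      (Real.log 8 + 2 * Real.log ‖deriv f z‖)
      + (2 * (Complex.log (deriv f w / deriv f z)).re
         - 2 * Real.log (1 + Complex.normSq (f w))) := by
    filter_upwards [hVopen.mem_nhds hzV] with w hw
    have hw0 : deriv f w ≠ 0 := hne w hw
    have habs : ‖deriv f w‖ ≠ 0 := by simpa using hw0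
    have habsz : ‖deriv f z‖ ≠ 0 := by simpa using hc0
    have hS : (0:ℝ) < 1 + ‖f w‖ ^ 2 := by positivity
    rw [hu w (hVsub hw)]
    have hRe : (Complex.log (deriv f w / deriv f z)).re
        = Real.log ‖deriv f w‖ - Real.log ‖deriv f z‖ := by
      rw [Complex.log_re, norm_div, Real.log_div habs habsz]
    have hnormSq : (1 : ℝ) + Complex.normSq (f w) = 1 + ‖f w‖ ^ 2 := by
      rw [Complex.sq_norm]
    rw [hRe, hnormSq,
      Real.log_div (mul_ne_zero (by norm_num) (pow_ne_zero 2 habs)) (pow_ne_zero 2 hS.ne'),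
      Real.log_mul (by norm_num) (pow_ne_zero 2 habs), Real.log_pow, Real.log_pow]
    push_cast; ring
  -- differentiability hypotheses for lap_comb
  have hRd : ∀ᶠ w in nhds z, DifferentiableAt ℝ
      (fun w' => (Complex.log (deriv f w' / deriv f z)).re) w := by
    filter_upwards [hVopen.mem_nhds hzV] with w hw
    exact diffAt_re_comp (hhAt w hw)
  have hBd : ∀ᶠ w in nhds z, DifferentiableAt ℝ
      (fun w' => Real.log (1 + Complex.normSq (f w'))) w := by
    filter_upwards [hVopen.mem_nhds hzV] with w hw
    exact diff_log_one_add_normSq (hfAt w hw)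
  have hR1 : DifferentiableAt ℝ
      (fun w => fderiv ℝ (fun w' => (Complex.log (deriv f w' / deriv f z)).re) w 1) z := by
    have e : (fun w => fderiv ℝ (fun w' => (Complex.log (deriv f w' / deriv f z)).re) w 1)
        =ᶠ[nhds z] fun w => (deriv (fun w' => Complex.log (deriv f w' / deriv f z)) w).re := by
      filter_upwards [hVopen.mem_nhds hzV] with w hw
      rw [fderiv_re_comp (hhAt w hw) 1, mul_one]
    exact e.differentiableAt_iff.mpr (diffAt_re_comp hdh)
  have hRI : DifferentiableAt ℝ
      (fun w => fderiv ℝ (fun w' => (Complex.log (deriv f w' / deriv f z)).re) w Complex.I)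
      z := by
    have e : (fun w => fderiv ℝ (fun w' => (Complex.log (deriv f w' / deriv f z)).re) w
          Complex.I)
        =ᶠ[nhds z] fun w =>
          ((deriv (fun w' => Complex.log (deriv f w' / deriv f z)) w) * Complex.I).re := by
      filter_upwards [hVopen.mem_nhds hzV] with w hw
      rw [fderiv_re_comp (hhAt w hw) Complex.I]
    exact e.differentiableAt_iff.mpr
      (diffAt_re_comp (p := fun w => (deriv (fun w' => Complex.log (deriv f w' / deriv f z)) w)
        * Complex.I) (hdh.mul_const _))
  have hposz : (0:ℝ) < 1 + Complex.normSq (f z) := by nlinarith [Complex.normSq_nonneg (f z)]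
  have hdenom : DifferentiableAt ℝ (fun w => 1 + Complex.normSq (f w)) z :=
    diff_one_add_normSq (hfAt z hzV)
  have hB1 : DifferentiableAt ℝ
      (fun w => fderiv ℝ (fun w' => Real.log (1 + Complex.normSq (f w'))) w 1) z := by
    have e : (fun w => fderiv ℝ (fun w' => Real.log (1 + Complex.normSq (f w'))) w 1)
        =ᶠ[nhds z] fun w =>
          2 * (deriv f w * (starRingEnd ℂ) (f w)).re / (1 + Complex.normSq (f w)) := by
      filter_upwards [hVopen.mem_nhds hzV] with w hw
      rw [fderiv_log_one_add_normSq (hfAt w hw) 1, mul_one]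
    refine e.differentiableAt_iff.mpr ?_
    have hnum : DifferentiableAt ℝ
        (fun w => 2 * (deriv f w * (starRingEnd ℂ) (f w)).re) z :=
      (diffAt_reMulConj hd2 (hfAt z hzV)).const_mul 2
    exact (hasFDerivAt_div' hnum.hasFDerivAt hdenom.hasFDerivAt hposz.ne').differentiableAt
  have hBI : DifferentiableAt ℝ
      (fun w => fderiv ℝ (fun w' => Real.log (1 + Complex.normSq (f w'))) w Complex.I) z := by
    have e : (fun w => fderiv ℝ (fun w' => Real.log (1 + Complex.normSq (f w'))) w Complex.I)
        =ᶠ[nhds z] fun w =>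
          2 * (deriv f w * Complex.I * (starRingEnd ℂ) (f w)).re
            / (1 + Complex.normSq (f w)) := by
      filter_upwards [hVopen.mem_nhds hzV] with w hw
      rw [fderiv_log_one_add_normSq (hfAt w hw) Complex.I]
    refine e.differentiableAt_iff.mpr ?_
    have hnum : DifferentiableAt ℝ
        (fun w => 2 * (deriv f w * Complex.I * (starRingEnd ℂ) (f w)).re) z :=
      ((diffAt_reMulConj (p := fun w => deriv f w * Complex.I) (hd2.mul_const _)
        (hfAt z hzV))).const_mul 2
    exact (hasFDerivAt_div' hnum.hasFDerivAt hdenom.hasFDerivAt hposz.ne').differentiableAt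
  -- assemble
  have hcomb := lap_comb (C := Real.log 8 + 2 * Real.log ‖deriv f z‖)
    hRd hBd hR1 hRI hB1 hBI
  have hlapR : lap (fun w => (Complex.log (deriv f w / deriv f z)).re) z = 0 :=
    lap_re_holo hVopen hzV hhd
  have hlapB : lap (fun w => Real.log (1 + Complex.normSq (f w))) z
      = 4 * Complex.normSq (deriv f z) / (1 + Complex.normSq (f z)) ^ 2 :=
    lap_log_one_add_normSq hVopen hzV (hf.mono hVsub)
  have hexp : Real.exp (u z) = 8 * Complex.normSq (deriv f z)
      / (1 + Complex.normSq (f z)) ^ 2 := by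
    rw [hu z hz]
    have habsz : (0:ℝ) < ‖deriv f z‖ := by
      simpa using hc0
    have hS : (0:ℝ) < 1 + ‖f z‖ ^ 2 := by positivity
    rw [Real.exp_log (by positivity)]
    rw [Complex.sq_norm, Complex.sq_norm]
  rw [lap_congr hueq, hcomb, hlapR, hlapB, hexp]
  ring
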